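/- arXiv:2407.21134 — 3 statements merged into one kernel-verified Lean document; each statement's English description precedes it below -/
import Mathlib

section
/- Let (s_1, ρ_1), …, (s_n, ρ_n) be pairs of positive real numbers with ρ_1 ≥ ρ_2 ≥ … ≥ ρ_n. Let j_1, …, j_k be distinct indices in {1,…,n}, and suppose r ∈ {1,…,n} satisfies ∑_{i=1}^{r-1} s_i < ∑_{i=1}^k s_{j_i} ≤ ∑_{i=1}^r s_i. Then ∑_{i=1}^r s_i ρ_i ≥ ∑_{i=1}^k s_{j_i} ρ_{j_i}. -/
/-- CHACI greedy-selection lemma: given items with positive storage costs `s i` and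
positive information densities `ρ i` sorted in descending order, any selection `J`
of items whose total storage lies between the greedy prefix sums up to `r-1` and `r`
retains no more total information than the greedy prefix of length `r`. -/
theorem chaci_greedy_lemma (n r : ℕ) (s ρ : ℕ → ℝ)
    (hs : ∀ i ∈ Finset.Icc 1 n, 0 < s i)
    (hρ : ∀ i ∈ Finset.Icc 1 n, 0 < ρ i)
    (hsorted : ∀ i j : ℕ, 1 ≤ i → i ≤ j → j ≤ n → ρ j ≤ ρ i)
    (J : Finset ℕ) (hJ : J ⊆ Finset.Icc 1 n)
    (hr1 : 1 ≤ r) (hrn : r ≤ n)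
    (hlow : ∑ i ∈ Finset.Icc 1 (r - 1), s i < ∑ j ∈ J, s j)
    (hhigh : ∑ j ∈ J, s j ≤ ∑ i ∈ Finset.Icc 1 r, s i) :
    ∑ j ∈ J, s j * ρ j ≤ ∑ i ∈ Finset.Icc 1 r, s i * ρ i := by
  set P : Finset ℕ := Finset.Icc 1 r with hP
  have hPn : P ⊆ Finset.Icc 1 n := by
    intro i hi
    rw [Finset.mem_Icc] at hi ⊢
    exact ⟨hi.1, hi.2.trans hrn⟩
  have hrmem : r ∈ Finset.Icc 1 n := Finset.mem_Icc.mpr ⟨hr1, hrn⟩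
  -- storage comparison on the symmetric differences
  have hsub : ∑ j ∈ J \ P, s j ≤ ∑ i ∈ P \ J, s i := by
    have h1 : ∑ j ∈ J ∩ P, s j + ∑ j ∈ J \ P, s j = ∑ j ∈ J, s j :=
      Finset.sum_inter_add_sum_sdiff J P s
    have h2 : ∑ i ∈ P ∩ J, s i + ∑ i ∈ P \ J, s i = ∑ i ∈ P, s i :=
      Finset.sum_inter_add_sum_sdiff P J s
    have hint : J ∩ P = P ∩ J := Finset.inter_comm J P
    rw [hint] at h1
    linarith [hhigh]
  -- density bounds
  have hJout : ∀ j ∈ J \ P, ρ j ≤ ρ r := by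
    intro j hj
    have hjJ := Finset.mem_sdiff.mp hj
    have hjn := Finset.mem_Icc.mp (hJ hjJ.1)
    have hjr : r < j := by
      by_contra h
      push_neg at h
      exact hjJ.2 (Finset.mem_Icc.mpr ⟨hjn.1, h⟩)
    exact hsorted r j hr1 hjr.le hjn.2
  have hPin : ∀ i ∈ P \ J, ρ r ≤ ρ i := by
    intro i hi
    have hiP := Finset.mem_Icc.mp (Finset.mem_sdiff.mp hi).1
    exact hsorted i r hiP.1 hiP.2 hrn
  have hρr : 0 < ρ r := hρ r hrmem
  -- main chain
  have key : ∑ j ∈ J \ P, s j * ρ j ≤ ∑ i ∈ P \ J, s i * ρ i := by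
    calc ∑ j ∈ J \ P, s j * ρ j
        ≤ ∑ j ∈ J \ P, s j * ρ r := by
          apply Finset.sum_le_sum
          intro j hj
          exact mul_le_mul_of_nonneg_left (hJout j hj)
            (hs j (hJ (Finset.mem_sdiff.mp hj).1)).le
      _ = (∑ j ∈ J \ P, s j) * ρ r := by rw [Finset.sum_mul]
      _ ≤ (∑ i ∈ P \ J, s i) * ρ r := mul_le_mul_of_nonneg_right hsub hρr.le
      _ = ∑ i ∈ P \ J, s i * ρ r := by rw [Finset.sum_mul]
      _ ≤ ∑ i ∈ P \ J, s i * ρ i := by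
          apply Finset.sum_le_sum
          intro i hi
          exact mul_le_mul_of_nonneg_left (hPin i hi)
            (hs i (hPn (Finset.mem_sdiff.mp hi).1)).le
  have h1 : ∑ j ∈ J ∩ P, s j * ρ j + ∑ j ∈ J \ P, s j * ρ j = ∑ j ∈ J, s j * ρ j :=
    Finset.sum_inter_add_sum_sdiff J P (fun j => s j * ρ j)
  have h2 : ∑ i ∈ P ∩ J, s i * ρ i + ∑ i ∈ P \ J, s i * ρ i = ∑ i ∈ P, s i * ρ i :=
    Finset.sum_inter_add_sum_sdiff P J (fun i => s i * ρ i)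
  have hint : J ∩ P = P ∩ J := Finset.inter_comm J P
  rw [hint] at h1
  linarith
end

section
/- Let (s_1, ρ_1), …, (s_n, ρ_n) be pairs of positive real numbers with ρ_1 ≥ ρ_2 ≥ … ≥ ρ_n, and let t ∈ (0, ∑_{i=1}^n s_i ρ_i]. Suppose indices j_1, …, j_k are distinct and satisfy ∑_{i=1}^k s_{j_i} ρ_{j_i} ≥ t, and let r be the least index with ∑_{i=1}^{r-1} s_i ρ_i < t ≤ ∑_{i=1}^r s_i ρ_i. Then ∑_{i=1}^r s_i − ∑_{i=1}^k s_{j_i} < max_{1 ≤ i ≤ r} s_i. -/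
/-- Near-optimality of the CHACI greedy algorithm: any feasible selection `J`
retaining at least `t` total information uses storage within `max_{1 ≤ i ≤ r} s i`
of the greedy prefix storage. -/
theorem chaci_greedy_near_optimal (n r : ℕ) (s ρ : ℕ → ℝ)
    (hs : ∀ i ∈ Finset.Icc 1 n, 0 < s i)
    (hρ : ∀ i ∈ Finset.Icc 1 n, 0 < ρ i)
    (hsorted : ∀ i j : ℕ, 1 ≤ i → i ≤ j → j ≤ n → ρ j ≤ ρ i)
    (t : ℝ) (ht : 0 < t) (ht' : t ≤ ∑ i ∈ Finset.Icc 1 n, s i * ρ i)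
    (J : Finset ℕ) (hJ : J ⊆ Finset.Icc 1 n)
    (hfeas : t ≤ ∑ j ∈ J, s j * ρ j)
    (hr1 : 1 ≤ r) (hrn : r ≤ n)
    (hlow : ∑ i ∈ Finset.Icc 1 (r - 1), s i * ρ i < t)
    (hhigh : t ≤ ∑ i ∈ Finset.Icc 1 r, s i * ρ i)
    (hleast : ∀ r' : ℕ, 1 ≤ r' → r' ≤ n →
      (∑ i ∈ Finset.Icc 1 (r' - 1), s i * ρ i < t ∧
        t ≤ ∑ i ∈ Finset.Icc 1 r', s i * ρ i) → r ≤ r') :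
    ∑ i ∈ Finset.Icc 1 r, s i - ∑ j ∈ J, s j <
      (Finset.Icc 1 r).sup' (Finset.nonempty_Icc.mpr hr1) s := by
  classical
  set P := Finset.Icc 1 r with hP
  have hρr : 0 < ρ r := hρ r (Finset.mem_Icc.mpr ⟨hr1, hrn⟩)
  -- membership facts
  have hBfact : ∀ b ∈ P \ J, ρ r ≤ ρ b ∧ 0 ≤ s b := by
    intro b hb
    have hbP : b ∈ P := (Finset.mem_sdiff.mp hb).1
    obtain ⟨hb1, hbr⟩ := Finset.mem_Icc.mp hbP
    exact ⟨hsorted b r hb1 hbr hrn, (hs b (Finset.mem_Icc.mpr ⟨hb1, hbr.trans hrn⟩)).le⟩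
  have hCfact : ∀ c ∈ J \ P, ρ c ≤ ρ r ∧ 0 ≤ s c := by
    intro c hc
    obtain ⟨hcJ, hcP⟩ := Finset.mem_sdiff.mp hc
    obtain ⟨hc1, hcn⟩ := Finset.mem_Icc.mp (hJ hcJ)
    have hrc : r ≤ c := by
      by_contra h
      exact hcP (Finset.mem_Icc.mpr ⟨hc1, by omega⟩)
    exact ⟨hsorted r c hr1 hrc hcn, (hs c (Finset.mem_Icc.mpr ⟨hc1, hcn⟩)).le⟩
  -- split the prefix sum at r
  have hsplit : ∑ i ∈ P, s i * ρ i
      = ∑ i ∈ Finset.Icc 1 (r - 1), s i * ρ i + s r * ρ r := by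
    have h1 : r = (r - 1) + 1 := by omega
    rw [hP, h1, Finset.sum_Icc_succ_top (by omega : 1 ≤ r - 1 + 1), ← h1]
  -- key inequality on weighted sums of the symmetric difference
  have hkey : ∑ b ∈ P \ J, s b * ρ b < ∑ c ∈ J \ P, s c * ρ c + s r * ρ r := by
    have e1 : ∑ i ∈ P ∩ J, (fun i => s i * ρ i) i + ∑ i ∈ P \ J, (fun i => s i * ρ i) i
        = ∑ i ∈ P, s i * ρ i := Finset.sum_inter_add_sum_sdiff P J _
    have e2 : ∑ i ∈ J ∩ P, (fun i => s i * ρ i) i + ∑ i ∈ J \ P, (fun i => s i * ρ i) i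
        = ∑ i ∈ J, s i * ρ i := Finset.sum_inter_add_sum_sdiff J P _
    rw [Finset.inter_comm] at e2
    have := hlow.trans_le hfeas
    simp only at e1 e2
    nlinarith [hsplit]
  have hBle : ρ r * ∑ b ∈ P \ J, s b ≤ ∑ b ∈ P \ J, s b * ρ b := by
    rw [Finset.mul_sum]
    refine Finset.sum_le_sum fun b hb => ?_
    obtain ⟨h1, h2⟩ := hBfact b hb
    nlinarith
  have hCle : ∑ c ∈ J \ P, s c * ρ c ≤ ρ r * ∑ c ∈ J \ P, s c := by
    rw [Finset.mul_sum]
    refine Finset.sum_le_sum fun c hc => ?_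
    obtain ⟨h1, h2⟩ := hCfact c hc
    nlinarith
  -- deduce the unweighted inequality
  have hmain : ∑ b ∈ P \ J, s b < ∑ c ∈ J \ P, s c + s r := by
    have h : ρ r * ∑ b ∈ P \ J, s b < ρ r * (∑ c ∈ J \ P, s c + s r) := by
      nlinarith
    exact lt_of_mul_lt_mul_left h hρr.le
  have e1 : ∑ i ∈ P ∩ J, s i + ∑ i ∈ P \ J, s i = ∑ i ∈ P, s i :=
    Finset.sum_inter_add_sum_sdiff P J s
  have e2 : ∑ i ∈ J ∩ P, s i + ∑ i ∈ J \ P, s i = ∑ i ∈ J, s i :=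
    Finset.sum_inter_add_sum_sdiff J P s
  rw [Finset.inter_comm] at e2
  have hsr : s r ≤ P.sup' (Finset.nonempty_Icc.mpr hr1) s :=
    Finset.le_sup' s (Finset.mem_Icc.mpr ⟨hr1, le_refl r⟩)
  linarith
end

section
/- Let f, f̂ : (0, S] → ℝ be step functions where f takes value ρ_q on the interval (∑_{i<q} s_i, ∑_{i≤q} s_i] for a descending sequence ρ_1 ≥ … ≥ ρ_r > 0, and f̂ is built the same way from any subsequence (s_{J_1}, ρ_{J_1}), …, (s_{J_m}, ρ_{J_m}) with J_1 < J_2 < … < J_m (extended by 0). Then f(x) ≥ f̂(x) for all x ∈ (0, S]. -/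
/-- locate the segment containing `x` in a cumulative-sum partition. -/
lemma chaci_exists_segment (n : ℕ) (a : ℕ → ℝ) (x : ℝ) (hx : 0 < x)
    (hxn : x ≤ ∑ i ∈ Finset.Icc 1 n, a i) :
    ∃ q ∈ Finset.Icc 1 n,
      ∑ i ∈ Finset.Icc 1 (q - 1), a i < x ∧ x ≤ ∑ i ∈ Finset.Icc 1 q, a i := by
  classical
  have hP : ∃ q, x ≤ ∑ i ∈ Finset.Icc 1 q, a i := ⟨n, hxn⟩
  set q := Nat.find hP with hq
  have hqle : x ≤ ∑ i ∈ Finset.Icc 1 q, a i := Nat.find_spec hP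
  have hq1 : 1 ≤ q := by
    by_contra h
    have : q = 0 := by omega
    rw [this] at hqle
    simp at hqle
    linarith
  have hqn : q ≤ n := Nat.find_le hxn
  have hlt : ¬ x ≤ ∑ i ∈ Finset.Icc 1 (q - 1), a i := Nat.find_min hP (by omega)
  exact ⟨q, Finset.mem_Icc.mpr ⟨hq1, hqn⟩, not_le.mp hlt, hqle⟩


/-- Pointwise domination of step functions: the step function `f` built from a
descending sequence `ρ_1 ≥ … ≥ ρ_r > 0` with segment widths `s_1, …, s_r` pointwise
dominates, on `(0, S]`, the step function `f̂` built in the same way from any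
subsequence `(s_{J_1}, ρ_{J_1}), …, (s_{J_m}, ρ_{J_m})` (with `J` strictly
increasing), extended by `0`. -/
theorem chaci_step_function_domination (r m : ℕ) (s ρ : ℕ → ℝ)
    (hs : ∀ i ∈ Finset.Icc 1 r, 0 < s i)
    (hρpos : ∀ i ∈ Finset.Icc 1 r, 0 < ρ i)
    (hsorted : ∀ i j : ℕ, 1 ≤ i → i ≤ j → j ≤ r → ρ j ≤ ρ i)
    (J : ℕ → ℕ) (hmr : m ≤ r)
    (hJmono : ∀ i j : ℕ, 1 ≤ i → i < j → j ≤ m → J i < J j)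
    (hJrange : ∀ i ∈ Finset.Icc 1 m, J i ∈ Finset.Icc 1 r)
    (f fhat : ℝ → ℝ)
    (hf : ∀ q ∈ Finset.Icc 1 r, ∀ x : ℝ,
      ∑ i ∈ Finset.Icc 1 (q - 1), s i < x → x ≤ ∑ i ∈ Finset.Icc 1 q, s i →
        f x = ρ q)
    (hfhat : ∀ q ∈ Finset.Icc 1 m, ∀ x : ℝ,
      ∑ i ∈ Finset.Icc 1 (q - 1), s (J i) < x → x ≤ ∑ i ∈ Finset.Icc 1 q, s (J i) →
        fhat x = ρ (J q))
    (hfhat0 : ∀ x : ℝ, ∑ i ∈ Finset.Icc 1 m, s (J i) < x → fhat x = 0) :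
    ∀ x : ℝ, 0 < x → x ≤ ∑ i ∈ Finset.Icc 1 r, s i → fhat x ≤ f x := by
  classical
  intro x hx hxS
  obtain ⟨q, hqmem, hqlt, hqle⟩ := chaci_exists_segment r s x hx hxS
  obtain ⟨hq1, hqr⟩ := Finset.mem_Icc.mp hqmem
  have hfx : f x = ρ q := hf q hqmem x hqlt hqle
  by_cases hm : x ≤ ∑ i ∈ Finset.Icc 1 m, s (J i)
  · obtain ⟨p, hpmem, hplt, hple⟩ :=
      chaci_exists_segment m (fun i => s (J i)) x hx hm
    obtain ⟨hp1, hpm⟩ := Finset.mem_Icc.mp hpmem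
    have hfhx : fhat x = ρ (J p) := hfhat p hpmem x hplt hple
    -- J p is in range
    obtain ⟨hJp1, hJpr⟩ := Finset.mem_Icc.mp (hJrange p hpmem)
    -- ∑_{i=1}^p s(J i) ≤ ∑_{j=1}^{J p} s j
    have hsub : (Finset.Icc 1 p).image J ⊆ Finset.Icc 1 (J p) := by
      intro j hj
      obtain ⟨i, hi, rfl⟩ := Finset.mem_image.mp hj
      obtain ⟨hi1, hip⟩ := Finset.mem_Icc.mp hi
      have h1 : 1 ≤ J i := (Finset.mem_Icc.mp (hJrange i
        (Finset.mem_Icc.mpr ⟨hi1, le_trans hip hpm⟩))).1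
      have h2 : J i ≤ J p := by
        rcases eq_or_lt_of_le hip with h | h
        · rw [h]
        · exact le_of_lt (hJmono i p hi1 h hpm)
      exact Finset.mem_Icc.mpr ⟨h1, h2⟩
    have hinj : Set.InjOn J (Finset.Icc 1 p) := by
      intro a ha b hb hab
      simp only [Finset.coe_Icc, Set.mem_Icc] at ha hb
      by_contra hne
      rcases Nat.lt_or_ge a b with h | h
      · exact absurd hab (Nat.ne_of_lt (hJmono a b ha.1 h (le_trans hb.2 hpm)))
      · have h' : b < a := by omega
        exact absurd hab.symm (Nat.ne_of_lt (hJmono b a hb.1 h' (le_trans ha.2 hpm)))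
    have hsum1 : ∑ i ∈ Finset.Icc 1 p, s (J i)
        = ∑ j ∈ (Finset.Icc 1 p).image J, s j :=
      (Finset.sum_image (fun a ha b hb => hinj ha hb)).symm
    have hsum2 : ∑ j ∈ (Finset.Icc 1 p).image J, s j
        ≤ ∑ j ∈ Finset.Icc 1 (J p), s j := by
      apply Finset.sum_le_sum_of_subset_of_nonneg hsub
      intro j hj _
      exact le_of_lt (hs j (Finset.mem_Icc.mpr
        ⟨(Finset.mem_Icc.mp hj).1, le_trans (Finset.mem_Icc.mp hj).2 hJpr⟩))
    -- conclude q ≤ J p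
    have hqJp : q ≤ J p := by
      by_contra h
      have hJq : J p ≤ q - 1 := by omega
      have hmono : ∑ j ∈ Finset.Icc 1 (J p), s j
          ≤ ∑ j ∈ Finset.Icc 1 (q - 1), s j := by
        apply Finset.sum_le_sum_of_subset_of_nonneg
        · exact Finset.Icc_subset_Icc le_rfl hJq
        · intro j hj _
          exact le_of_lt (hs j (Finset.mem_Icc.mpr
            ⟨(Finset.mem_Icc.mp hj).1, le_trans (Finset.mem_Icc.mp hj).2 (by omega)⟩))
      have : x ≤ ∑ j ∈ Finset.Icc 1 (q - 1), s j := by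
        calc x ≤ ∑ i ∈ Finset.Icc 1 p, s (J i) := hple
        _ = ∑ j ∈ (Finset.Icc 1 p).image J, s j := hsum1
        _ ≤ ∑ j ∈ Finset.Icc 1 (J p), s j := hsum2
        _ ≤ _ := hmono
      linarith
    rw [hfx, hfhx]
    exact hsorted q (J p) hq1 hqJp hJpr
  · rw [hfx, hfhat0 x (not_le.mp hm)]
    exact le_of_lt (hρpos q hqmem)
end
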